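/- For a hyperbolic automorphism ψ of 𝔻 with fixed points a, b on the unit circle and any w ∈ ℂ, the function h_w(z) = ((b−z)/(a−z))^w satisfies h_w(ψ(z)) = e^{δw} h_w(z) for all z ∈ 𝔻, where δ = −log ψ'(a). -/

import Mathlib

open Complex Filter Metric Set
open Topology

noncomputable section


lemma not_eventually_const_of_injOn {f : ℂ → ℂ} {s : Set ℂ} (hinj : Set.InjOn f s)
    {x : ℂ} (hx : s ∈ 𝓝 x) : ¬ ∀ᶠ z in 𝓝 x, f z = f x := by
  intro hev
  have h2 : ∀ᶠ z in 𝓝[≠] x, f z = f x ∧ z ∈ s :=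
    ((hev.and hx).filter_mono nhdsWithin_le_nhds)
  obtain ⟨z, ⟨hfz, hzs⟩, hzx⟩ := (h2.and self_mem_nhdsWithin).exists
  exact hzx (hinj hzs (mem_of_mem_nhds hx) hfz)

lemma image_mem_nhds_of_injOn {f : ℂ → ℂ} {s : Set ℂ} (hinj : Set.InjOn f s)
    {x : ℂ} (hx : s ∈ 𝓝 x) (hf : AnalyticAt ℂ f x) {V : Set ℂ} (hV : V ∈ 𝓝 x) :
    f '' V ∈ 𝓝 (f x) := by
  rcases hf.eventually_constant_or_nhds_le_map_nhds with hc | hle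
  · exact absurd hc (not_eventually_const_of_injOn hinj hx)
  · exact hle (image_mem_map hV)

lemma deriv_ne_zero_of_injOn {f : ℂ → ℂ} {s : Set ℂ} (hs : IsOpen s)
    (hf : DifferentiableOn ℂ f s) (hinj : Set.InjOn f s) {x : ℂ} (hx : x ∈ s) :
    deriv f x ≠ 0 := by
  intro hd0
  have hsx : s ∈ 𝓝 x := hs.mem_nhds hx
  have hfa : AnalyticAt ℂ f x := hf.analyticAt hsx
  have hF : AnalyticAt ℂ (fun z => f z - f x) x := hfa.sub analyticAt_const
  have hnc : ¬ ∀ᶠ z in 𝓝 x, f z = f x := not_eventually_const_of_injOn hinj hsx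
  have hord : analyticOrderAt (fun z => f z - f x) x ≠ ⊤ := by
    intro htop
    rw [analyticOrderAt_eq_top] at htop
    exact hnc (htop.mono fun z hz => sub_eq_zero.mp hz)
  obtain ⟨n, hn⟩ : ∃ n : ℕ, analyticOrderAt (fun z => f z - f x) x = n := by
    lift analyticOrderAt (fun z => f z - f x) x to ℕ using hord with n hn
    exact ⟨n, rfl⟩
  obtain ⟨g, hg, hg0, hfg⟩ := (hF.analyticOrderAt_eq_natCast).mp hn
  have hn0 : n ≠ 0 := by
    rintro rfl
    have := hfg.self_of_nhds
    simp at this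
    exact hg0 this.symm
  have hn1 : n ≠ 1 := by
    rintro rfl
    have hgd : DifferentiableAt ℂ g x := hg.differentiableAt
    have h1 : HasDerivAt (fun z => (z - x) ^ 1 • g z) (g x) x := by
      have := (((hasDerivAt_id x).sub_const x).mul hgd.hasDerivAt)
      have e : (fun z => (z - x) ^ 1 • g z) = fun y => (y - x) * g y := by funext z; simp
      rw [e]; exact this.congr_deriv (by simp)
    have hfg' : (fun z => f z - f x) =ᶠ[𝓝 x] (fun z => (z - x) ^ 1 • g z) := hfg
    have h2 : deriv (fun z => f z - f x) x = g x := by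
      rw [hfg'.deriv_eq]
      exact h1.deriv
    rw [deriv_sub_const] at h2
    rw [hd0] at h2
    exact hg0 h2.symm
  have hn2 : 2 ≤ n := by omega
  have hnC : (n : ℂ) ≠ 0 := Nat.cast_ne_zero.mpr hn0
  set c : ℂ := Complex.exp (Complex.log (g x) / n) with hc
  have hc0 : c ≠ 0 := Complex.exp_ne_zero _
  have hcn : c ^ n = g x := by
    rw [hc, ← Complex.exp_nat_mul, mul_div_cancel₀ _ hnC, Complex.exp_log hg0]
  set r : ℂ → ℂ := fun z => c * Complex.exp (Complex.log (g z / g x) / n) with hr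
  -- eventually, `g z / g x` is in the slit plane and nonzero
  have hgc : ContinuousAt g x := hg.continuousAt
  have hslit : ∀ᶠ z in 𝓝 x, g z / g x ∈ Complex.slitPlane := by
    have h1 : ContinuousAt (fun z => g z / g x) x := hgc.div_const _
    have : (fun z => g z / g x) x = 1 := div_self hg0
    have hmem : Complex.slitPlane ∈ 𝓝 ((fun z => g z / g x) x) := by
      rw [this]
      exact Complex.isOpen_slitPlane.mem_nhds (by simp [Complex.mem_slitPlane_iff])
    exact h1 hmem
  have hrpow : ∀ᶠ z in 𝓝 x, (r z) ^ n = g z := by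
    filter_upwards [hslit] with z hz
    have hgz : g z / g x ≠ 0 := Complex.slitPlane_ne_zero hz
    have hgz' : g z ≠ 0 := fun h => hgz (by simp [h])
    rw [hr]
    simp only
    rw [mul_pow, hcn, ← Complex.exp_nat_mul, mul_div_cancel₀ _ hnC,
      Complex.exp_log hgz]
    field_simp
  -- differentiability of r near x
  have hrd : ∀ᶠ z in 𝓝 x, DifferentiableAt ℂ r z := by
    filter_upwards [hslit, hg.eventually_analyticAt] with z hz hgz
    have h1 : DifferentiableAt ℂ (fun z => g z / g x) z := hgz.differentiableAt.div_const _
    have h2 : DifferentiableAt ℂ (fun z => Complex.log (g z / g x)) z :=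
      h1.clog hz
    exact ((h2.div_const _).cexp).const_mul _
  set φ : ℂ → ℂ := fun z => (z - x) * r z with hφ
  have hrx : r x = c := by
    rw [hr]; simp [div_self hg0, Complex.log_one]
  have hφd : HasDerivAt φ c x := by
    have h1 : DifferentiableAt ℂ r x := hrd.self_of_nhds
    have := ((hasDerivAt_id x).sub_const x).mul h1.hasDerivAt
    exact this.congr_deriv (by simp [hrx])
  have hφa : AnalyticAt ℂ φ x := by
    obtain ⟨U, hUs, hUo, hxU⟩ := _root_.mem_nhds_iff.mp hrd
    have : DifferentiableOn ℂ φ U := fun z hz =>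
      (((differentiableAt_id.sub_const x).mul (hUs hz))).differentiableWithinAt
    exact this.analyticAt (hUo.mem_nhds hxU)
  have hφ0 : φ x = 0 := by simp [hφ]
  have hφnc : ¬ ∀ᶠ z in 𝓝 x, φ z = φ x := by
    intro hev
    have hev' : φ =ᶠ[𝓝 x] (fun _ => φ x) := hev
    have : deriv φ x = 0 := by rw [hev'.deriv_eq]; simp
    rw [hφd.deriv] at this
    exact hc0 this
  have hmap : ∀ V ∈ 𝓝 x, φ '' V ∈ 𝓝 (0 : ℂ) := by
    intro V hV
    rcases hφa.eventually_constant_or_nhds_le_map_nhds with hcst | hle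
    · exact absurd hcst hφnc
    · rw [← hφ0]
      exact hle (image_mem_map hV)
  -- the key neighborhood
  have hfφ : ∀ᶠ z in 𝓝 x, f z = f x + (φ z) ^ n := by
    filter_upwards [hfg, hrpow] with z h1 h2
    have : f z - f x = (z - x) ^ n * g z := h1
    rw [hφ]
    simp only [mul_pow, h2]
    linear_combination this
  obtain ⟨V, hVmem, hVs, hVf⟩ : ∃ V ∈ 𝓝 x, V ⊆ s ∧ ∀ z ∈ V, f z = f x + (φ z) ^ n := by
    refine ⟨s ∩ {z | f z = f x + (φ z) ^ n}, inter_mem hsx hfφ, inter_subset_left, ?_⟩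
    exact fun z hz => hz.2
  obtain ⟨ε, hε, hball⟩ := Metric.mem_nhds_iff.mp (hmap V hVmem)
  set ζ : ℂ := Complex.exp (2 * Real.pi * Complex.I / n) with hζ
  have hζn : ζ ^ n = 1 := by
    rw [hζ, ← Complex.exp_nat_mul, mul_div_cancel₀ _ hnC, Complex.exp_two_pi_mul_I]
  have hζ1 : ζ ≠ 1 := by
    intro h1
    rw [hζ] at h1
    obtain ⟨k, hk⟩ := Complex.exp_eq_one_iff.mp h1
    have h2πI : (2 * Real.pi * Complex.I : ℂ) ≠ 0 := by
      simp [Complex.I_ne_zero, Real.pi_ne_zero, Complex.ofReal_ne_zero]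
    have hk' : (1:ℂ) * (2 * Real.pi * Complex.I) = ((k * n : ℤ) : ℂ) * (2 * Real.pi * Complex.I) := by
      field_simp at hk
      push_cast
      linear_combination (2 * Real.pi * Complex.I) * hk
    have hk2 : (1:ℤ) = k * n := by
      have := mul_right_cancel₀ h2πI hk'
      exact_mod_cast this
    have hdvd : (n:ℤ) ∣ 1 := ⟨k, by linarith [hk2]⟩
    have := Int.le_of_dvd (by norm_num) hdvd
    have hn2' : (2:ℤ) ≤ (n:ℤ) := by exact_mod_cast hn2
    linarith
  have hζabs : ‖ζ‖ = 1 := by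
    rw [hζ, Complex.norm_exp]
    have : (2 * Real.pi * Complex.I / n : ℂ).re = 0 := by
      simp [Complex.div_re]
    rw [this, Real.exp_zero]
  set v : ℂ := ((ε / 2 : ℝ) : ℂ) with hv
  have hv0 : v ≠ 0 := by
    simp [hv, Complex.ofReal_ne_zero]
    positivity
  have hvmem : v ∈ ball (0:ℂ) ε := by
    simp only [mem_ball, dist_zero_right, hv, Complex.norm_real, Real.norm_eq_abs]
    rw [abs_of_pos (by positivity)]
    linarith
  have hζvmem : ζ * v ∈ ball (0:ℂ) ε := by
    simp only [mem_ball, dist_zero_right, norm_mul]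
    rw [show ‖ζ‖ = 1 from hζabs, one_mul]
    simpa only [mem_ball, dist_zero_right] using hvmem
  obtain ⟨z1, hz1V, hz1⟩ := hball hvmem
  obtain ⟨z2, hz2V, hz2⟩ := hball hζvmem
  have hfz : f z1 = f z2 := by
    rw [hVf z1 hz1V, hVf z2 hz2V, hz1, hz2, mul_pow, hζn, one_mul]
  have : z1 = z2 := hinj (hVs hz1V) (hVs hz2V) hfz
  rw [this, hz2] at hz1
  have : (ζ - 1) * v = 0 := by linear_combination hz1
  rcases mul_eq_zero.mp this with h | h
  · exact hζ1 (by linear_combination h)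
  · exact hv0 h


lemma one_sub_ne_zero_of_abs_lt {w : ℂ} (h : ‖w‖ < 1) : 1 - w ≠ 0 := by
  intro h0
  have : w = 1 := by linear_combination -h0
  rw [this] at h; simp at h

lemma blaschke_normSq_identity (p z : ℂ) :
    Complex.normSq (p - z) =
      Complex.normSq (1 - (starRingEnd ℂ) p * z) - (1 - Complex.normSq p) * (1 - Complex.normSq z) := by
  simp only [Complex.normSq_apply, Complex.sub_re, Complex.sub_im, Complex.mul_re,
    Complex.mul_im, Complex.one_re, Complex.one_im, Complex.conj_re, Complex.conj_im]
  ring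

lemma blaschke_den_ne {p z : ℂ} (h : ‖p‖ * ‖z‖ < 1) :
    1 - (starRingEnd ℂ) p * z ≠ 0 := by
  apply one_sub_ne_zero_of_abs_lt
  rw [norm_mul, Complex.norm_conj]
  exact h

lemma blaschke_abs_lt {p z : ℂ} (hp : ‖p‖ < 1) (hz : ‖z‖ < 1) :
    ‖(p - z) / (1 - (starRingEnd ℂ) p * z)‖ < 1 := by
  have hden : 1 - (starRingEnd ℂ) p * z ≠ 0 := by
    apply blaschke_den_ne
    calc ‖p‖ * ‖z‖ ≤ 1 * ‖z‖ := by
          apply mul_le_mul_of_nonneg_right hp.le (norm_nonneg z)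
      _ < 1 := by simpa using hz
  have hdpos : 0 < ‖1 - (starRingEnd ℂ) p * z‖ := by
    simpa [norm_pos_iff] using hden
  rw [norm_div, div_lt_one hdpos]
  have hn : Complex.normSq (p - z) < Complex.normSq (1 - (starRingEnd ℂ) p * z) := by
    rw [blaschke_normSq_identity p z]
    have h1 : Complex.normSq p < 1 := by
      rw [← Complex.sq_norm]; nlinarith [norm_nonneg p]
    have h2 : Complex.normSq z < 1 := by
      rw [← Complex.sq_norm]; nlinarith [norm_nonneg z]
    nlinarith
  rw [Complex.norm_def, Complex.norm_def]
  exact Real.sqrt_lt_sqrt (Complex.normSq_nonneg _) hn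

lemma blaschke_abs_eq {p z : ℂ} (hp : ‖p‖ < 1) (hz : ‖z‖ = 1) :
    ‖(p - z) / (1 - (starRingEnd ℂ) p * z)‖ = 1 := by
  have hden : 1 - (starRingEnd ℂ) p * z ≠ 0 := by
    apply blaschke_den_ne
    rw [hz, mul_one]; exact hp
  have hdpos : 0 < ‖1 - (starRingEnd ℂ) p * z‖ := by
    simpa [norm_pos_iff] using hden
  rw [norm_div, div_eq_one_iff_eq hdpos.ne']
  have hn : Complex.normSq (p - z) = Complex.normSq (1 - (starRingEnd ℂ) p * z) := by
    rw [blaschke_normSq_identity p z]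
    have h2 : Complex.normSq z = 1 := by rw [← Complex.sq_norm, hz]; norm_num
    rw [h2]; ring
  rw [Complex.norm_def, Complex.norm_def, hn]

lemma blaschke_invol {p z : ℂ} (hp : ‖p‖ < 1) (hz : ‖z‖ ≤ 1) :
    (p - (p - z) / (1 - (starRingEnd ℂ) p * z)) /
      (1 - (starRingEnd ℂ) p * ((p - z) / (1 - (starRingEnd ℂ) p * z))) = z := by
  set c := (starRingEnd ℂ) p with hc
  have h1 : 1 - c * z ≠ 0 := by
    apply blaschke_den_ne
    nlinarith [norm_nonneg p, norm_nonneg z]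
  have hcp : c * p = (Complex.normSq p : ℂ) := by
    rw [hc, mul_comm, Complex.mul_conj]
  have h2 : 1 - c * p ≠ 0 := by
    rw [hcp]
    have : Complex.normSq p < 1 := by
      rw [← Complex.sq_norm]; nlinarith [norm_nonneg p]
    intro h0
    have : (Complex.normSq p : ℂ) = 1 := by linear_combination -h0
    have := congrArg Complex.re this
    simp at this
    linarith
  have e1 : p - (p - z) / (1 - c * z) = z * (1 - c * p) / (1 - c * z) := by
    rw [eq_div_iff h1, sub_mul, div_mul_cancel₀ _ h1]; ring
  have e2 : 1 - c * ((p - z) / (1 - c * z)) = (1 - c * p) / (1 - c * z) := by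
    rw [eq_div_iff h1, sub_mul, mul_assoc, div_mul_cancel₀ _ h1]; ring
  rw [e1, e2, div_div_div_cancel_right₀ h1, mul_div_assoc, div_self h2, mul_one]

lemma psi_maps_sphere {ψ : ℂ → ℂ} {R : ℝ} (hR : 1 < R)
    (hd : DifferentiableOn ℂ ψ (ball (0:ℂ) R))
    (hbij : Set.BijOn ψ (ball (0:ℂ) 1) (ball (0:ℂ) 1))
    {ζ : ℂ} (hζ : ‖ζ‖ = 1) : ‖ψ ζ‖ = 1 := by
  have hζR : ζ ∈ ball (0:ℂ) R := by simp [mem_ball, dist_zero_right, hζ]; linarith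
  have hsub : closedBall (0:ℂ) 1 ⊆ ball (0:ℂ) R := closedBall_subset_ball hR
  have hcont : ContinuousOn ψ (closedBall (0:ℂ) 1) := hd.continuousOn.mono hsub
  have hζcb : ζ ∈ closedBall (0:ℂ) 1 := by simp [mem_closedBall, dist_zero_right, hζ]
  have hle : ‖ψ ζ‖ ≤ 1 := by
    have h0 : (closedBall (0:ℂ) 1) = closure (ball (0:ℂ) 1) := (closure_ball (0:ℂ) one_ne_zero).symm
    have h1 : ψ '' closure (ball (0:ℂ) 1) ⊆ closure (ψ '' ball (0:ℂ) 1) := by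
      apply ContinuousOn.image_closure
      rw [← h0]; exact hcont
    have h2 : ψ ζ ∈ closure (ψ '' ball (0:ℂ) 1) := h1 ⟨ζ, by rw [← h0]; exact hζcb, rfl⟩
    rw [hbij.image_eq, closure_ball (0:ℂ) one_ne_zero] at h2
    simpa [mem_closedBall, dist_zero_right] using h2
  rcases eq_or_lt_of_le hle with h | hlt
  · exact h
  exfalso
  obtain ⟨x, hx, hψx⟩ := hbij.surjOn (by simpa [mem_ball, dist_zero_right] using hlt)
  have hxζ : x ≠ ζ := by
    intro h; rw [h] at hx
    simp [mem_ball, dist_zero_right, hζ] at hx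
  have hd0 : 0 < dist ζ x := dist_pos.mpr (Ne.symm hxζ)
  have hρ : 0 < dist ζ x / 2 := by positivity
  set ρ := dist ζ x / 2 with hρdef
  have hVnhds : ball x ρ ∩ ball (0:ℂ) 1 ∈ 𝓝 x :=
    inter_mem (ball_mem_nhds x hρ) (isOpen_ball.mem_nhds hx)
  have hxa : AnalyticAt ℂ ψ x :=
    hd.analyticAt (isOpen_ball.mem_nhds (ball_subset_ball hR.le hx))
  have himg : ψ '' (ball x ρ ∩ ball (0:ℂ) 1) ∈ 𝓝 (ψ ζ) := by
    rw [← hψx]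
    exact image_mem_nhds_of_injOn hbij.injOn (isOpen_ball.mem_nhds hx) hxa hVnhds
  have hca : ContinuousAt ψ ζ :=
    (hd.differentiableAt (isOpen_ball.mem_nhds hζR)).continuousAt
  have hT : Tendsto ψ (𝓝[ball (0:ℂ) 1] ζ) (𝓝 (ψ ζ)) :=
    hca.continuousWithinAt.tendsto
  have hNB : (𝓝[ball (0:ℂ) 1] ζ).NeBot := by
    rw [← mem_closure_iff_nhdsWithin_neBot, closure_ball (0:ℂ) one_ne_zero]
    exact hζcb
  have hev1 : ∀ᶠ z in 𝓝[ball (0:ℂ) 1] ζ, ψ z ∈ ψ '' (ball x ρ ∩ ball (0:ℂ) 1) := hT himg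
  have hev2 : ∀ᶠ z in 𝓝[ball (0:ℂ) 1] ζ, z ∉ closedBall x ρ := by
    apply eventually_nhdsWithin_of_eventually_nhds
    have : (closedBall x ρ)ᶜ ∈ 𝓝 ζ := by
      apply (Metric.isClosed_closedBall).isOpen_compl.mem_nhds
      simp only [mem_compl_iff, mem_closedBall]
      intro h
      rw [hρdef] at h
      linarith
    exact this
  obtain ⟨z, hz1, hz2, hz3⟩ := (hev1.and (hev2.and self_mem_nhdsWithin)).exists
  obtain ⟨z', ⟨hz'ρ, hz'b⟩, hz'⟩ := hz1
  have : z' = z := hbij.injOn hz'b hz3 hz'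
  rw [this] at hz'ρ
  exact hz2 (ball_subset_closedBall hz'ρ)

lemma exists_blaschke_form {ψ : ℂ → ℂ} {R : ℝ} (hR : 1 < R)
    (hd : DifferentiableOn ℂ ψ (ball (0:ℂ) R))
    (hbij : Set.BijOn ψ (ball (0:ℂ) 1) (ball (0:ℂ) 1)) :
    ∃ l p : ℂ, ‖p‖ < 1 ∧ l ≠ 0 ∧
      ∀ z ∈ ball (0:ℂ) 1, ψ z * (1 - (starRingEnd ℂ) p * z) = l * (p - z) := by
  have hball1R : ball (0:ℂ) 1 ⊆ ball (0:ℂ) R := ball_subset_ball hR.le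
  obtain ⟨z0, hz0b, hψz0⟩ := hbij.surjOn (mem_ball_self one_pos)
  have hz0abs : ‖z0‖ < 1 := by simpa [mem_ball, dist_zero_right] using hz0b
  set c : ℂ := (starRingEnd ℂ) z0 with hcdef
  set B : ℂ → ℂ := fun z => (z0 - z) / (1 - c * z) with hBdef
  set t : ℝ := ‖z0‖ with htdef
  have ht0 : 0 ≤ t := norm_nonneg z0
  have ht1 : t < 1 := hz0abs
  set s₀ : ℝ := 2 / (1 + t) with hs₀def
  have hs₀1 : 1 < s₀ := by
    rw [hs₀def, lt_div_iff₀ (by linarith)]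
    linarith
  have hkey : ∀ z : ℂ, ‖z‖ < s₀ → ‖z0‖ * ‖z‖ < 1 := by
    intro z hz
    rcases eq_or_lt_of_le ht0 with h | h
    · rw [htdef] at h
      rw [← h, zero_mul]; norm_num
    calc ‖z0‖ * ‖z‖ < t * s₀ := mul_lt_mul_of_pos_left hz h
      _ = 2 * t / (1 + t) := by rw [hs₀def]; ring
      _ < 1 := by rw [div_lt_one (by linarith)]; linarith
  have hBden : ∀ z : ℂ, ‖z‖ < s₀ → 1 - c * z ≠ 0 := fun z hz =>
    blaschke_den_ne (hkey z hz)
  have hBdiffAt : ∀ z : ℂ, ‖z‖ < s₀ → DifferentiableAt ℂ B z := by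
    intro z hz
    apply DifferentiableAt.div
    · exact (differentiable_const z0).differentiableAt.sub differentiableAt_id
    · exact (differentiableAt_const 1).sub ((differentiableAt_const c).mul differentiableAt_id)
    · exact hBden z hz
  have hBcont : ContinuousOn B (ball (0:ℂ) s₀) := fun z hz =>
    ((hBdiffAt z (by simpa [mem_ball, dist_zero_right] using hz)).continuousAt).continuousWithinAt
  set W : Set ℂ := ball (0:ℂ) s₀ ∩ B ⁻¹' (ball (0:ℂ) R) with hWdef
  have hWopen : IsOpen W := hBcont.isOpen_inter_preimage isOpen_ball isOpen_ball
  have hWsub : closedBall (0:ℂ) 1 ⊆ W := by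
    intro z hz
    have hzabs : ‖z‖ ≤ 1 := by simpa [mem_closedBall, dist_zero_right] using hz
    constructor
    · simp only [mem_ball, dist_zero_right]
      calc ‖z‖ ≤ 1 := hzabs
        _ < s₀ := hs₀1
    · simp only [mem_preimage, mem_ball, dist_zero_right]
      have : ‖B z‖ ≤ 1 := by
        rcases eq_or_lt_of_le hzabs with h | h
        · exact le_of_eq (blaschke_abs_eq hz0abs h.symm.symm)
        · exact le_of_lt (blaschke_abs_lt hz0abs h)
      calc ‖B z‖ ≤ 1 := this
        _ < R := hR
  obtain ⟨δ, hδ0, hδsub⟩ :=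
    (isCompact_closedBall (0:ℂ) 1).exists_cthickening_subset_open hWopen hWsub
  set s : ℝ := 1 + δ with hsdef
  have hs1 : 1 < s := by rw [hsdef]; linarith
  have hballsW : ball (0:ℂ) s ⊆ W := by
    intro z hz
    apply hδsub
    have hzabs : ‖z‖ < s := by simpa [mem_ball, dist_zero_right] using hz
    rcases le_or_gt (‖z‖) 1 with h | h
    · exact self_subset_cthickening _ (by simpa [mem_closedBall, dist_zero_right] using h)
    · have hzne : z ≠ 0 := by
        intro h0; rw [h0] at h; norm_num at h
      apply mem_cthickening_of_dist_le z (z / ‖z‖) δ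
      · simp only [mem_closedBall, dist_zero_right]
        rw [norm_div, Complex.norm_real, Real.norm_eq_abs, abs_of_pos (norm_pos_iff.mpr hzne)]
        rw [show ‖z‖ = ‖z‖ from rfl, div_self (norm_pos_iff.mpr hzne).ne']
      · have : dist z (z / ‖z‖) = ‖z‖ - 1 := by
          rw [dist_eq_norm]
          have : z - z / ‖z‖ = z * (1 - ((‖z‖ : ℝ) : ℂ)⁻¹) := by
            rw [div_eq_mul_inv]; ring
          rw [this, norm_mul]
          have hinv1 : (‖z‖)⁻¹ ≤ 1 := by
            rw [inv_le_one_iff₀]; right; linarith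
          have hre : ‖(1 - ((‖z‖ : ℝ) : ℂ)⁻¹)‖ = 1 - (‖z‖)⁻¹ := by
            rw [← Complex.ofReal_inv, ← Complex.ofReal_one, ← Complex.ofReal_sub,
              Complex.norm_real, Real.norm_eq_abs, _root_.abs_of_nonneg (by linarith)]
          rw [hre]
          have hpos : (0:ℝ) < ‖z‖ := norm_pos_iff.mpr hzne
          field_simp
        rw [this]
        rw [hsdef] at hzabs
        linarith
  have hballs₀ : ball (0:ℂ) s ⊆ ball (0:ℂ) s₀ := fun z hz => (hballsW hz).1
  set G : ℂ → ℂ := fun z => ψ (B z) with hGdef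
  have hGdiff : DifferentiableOn ℂ G (ball (0:ℂ) s) := by
    intro z hz
    have hzW := hballsW hz
    have h1 : DifferentiableAt ℂ B z :=
      hBdiffAt z (by simpa [mem_ball, dist_zero_right] using hballs₀ hz)
    have h2 : DifferentiableAt ℂ ψ (B z) := hd.differentiableAt (isOpen_ball.mem_nhds hzW.2)
    exact (h2.comp z h1).differentiableWithinAt
  have hB0 : B 0 = z0 := by simp [hBdef]
  have hG0 : G 0 = 0 := by rw [hGdef]; simp only; rw [hB0, hψz0]
  have hBmaps : ∀ z ∈ ball (0:ℂ) 1, B z ∈ ball (0:ℂ) 1 := by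
    intro z hz
    simp only [mem_ball, dist_zero_right] at hz ⊢
    exact blaschke_abs_lt hz0abs hz
  have hGmaps : MapsTo G (ball (0:ℂ) 1) (ball (0:ℂ) 1) := fun z hz =>
    hbij.mapsTo (hBmaps z hz)
  have hBinvol : ∀ z : ℂ, ‖z‖ ≤ 1 → B (B z) = z := fun z hz =>
    blaschke_invol hz0abs hz
  have hGinj : Set.InjOn G (ball (0:ℂ) 1) := by
    intro z1 h1 z2 h2 heq
    have hB1 := hBmaps z1 h1
    have hB2 := hBmaps z2 h2
    have : B z1 = B z2 := hbij.injOn hB1 hB2 heq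
    have e1 := hBinvol z1 (le_of_lt (by simpa [mem_ball, dist_zero_right] using h1))
    have e2 := hBinvol z2 (le_of_lt (by simpa [mem_ball, dist_zero_right] using h2))
    rw [← e1, ← e2, this]
  have hball1s : ball (0:ℂ) 1 ⊆ ball (0:ℂ) s := ball_subset_ball hs1.le
  have hGdiff1 : DifferentiableOn ℂ G (ball (0:ℂ) 1) := hGdiff.mono hball1s
  have hGmaps' : MapsTo G (ball (0:ℂ) 1) (ball (G 0) 1) := by rw [hG0]; exact hGmaps
  set F : ℂ → ℂ := dslope G 0 with hFdef
  have hFdiff : DifferentiableOn ℂ F (ball (0:ℂ) s) :=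
    (differentiableOn_dslope (isOpen_ball.mem_nhds (mem_ball_self (by linarith)))).mpr hGdiff
  have hFle : ∀ z ∈ ball (0:ℂ) 1, ‖F z‖ ≤ 1 := by
    intro z hz
    have := Complex.norm_dslope_le_div_of_mapsTo_ball hGdiff1 (hGmaps'.mono_right ball_subset_closedBall) hz
    simpa using this
  -- F is nonvanishing on the closed ball
  have hGsph : ∀ z : ℂ, ‖z‖ = 1 → ‖G z‖ = 1 := by
    intro z hz
    have : ‖B z‖ = 1 := blaschke_abs_eq hz0abs hz
    exact psi_maps_sphere hR hd hbij this
  have hderivB0 : deriv B 0 = (Complex.normSq z0 : ℂ) - 1 := by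
    have hfd : HasDerivAt (fun z : ℂ => z0 - z) (-1) 0 := by
      simpa using ((hasDerivAt_id (0:ℂ)).const_sub z0)
    have hgd : HasDerivAt (fun z : ℂ => 1 - c * z) (-c) 0 := by
      have := ((hasDerivAt_id (0:ℂ)).const_mul c).const_sub 1
      simpa using this
    have hg0 : (1 : ℂ) - c * 0 ≠ 0 := by simp
    have := hfd.div hgd hg0
    have heq := this.deriv
    rw [hBdef]
    rw [show (fun z => (z0 - z) / (1 - c * z)) = ((fun z => z0 - z) / fun z => 1 - c * z) from rfl, heq]
    have hcz : c * z0 = (Complex.normSq z0 : ℂ) := by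
      rw [hcdef, mul_comm, Complex.mul_conj]
    field_simp
    linear_combination (1:ℂ) * hcz
  have hF0 : F 0 ≠ 0 := by
    rw [hFdef, dslope_same]
    have hψ'z0 : deriv ψ z0 ≠ 0 :=
      deriv_ne_zero_of_injOn isOpen_ball (hd.mono hball1R) hbij.injOn hz0b
    have hcomp : deriv G 0 = deriv ψ (B 0) * deriv B 0 := by
      rw [hGdef]
      exact deriv_comp (x := 0) (hd.differentiableAt (isOpen_ball.mem_nhds (by
        rw [hB0]; exact hball1R hz0b))) (hBdiffAt 0 (by simpa using lt_trans one_pos hs₀1))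
    rw [hcomp, hB0, hderivB0]
    apply mul_ne_zero hψ'z0
    intro h0
    have : (Complex.normSq z0 : ℂ) = 1 := by linear_combination h0
    have := congrArg Complex.re this
    simp at this
    have : Complex.normSq z0 < 1 := by
      rw [← Complex.sq_norm]; nlinarith [norm_nonneg z0]
    linarith
  have hFne : ∀ z ∈ closedBall (0:ℂ) 1, F z ≠ 0 := by
    intro z hz
    rcases eq_or_ne z 0 with rfl | hzne
    · exact hF0
    · rw [hFdef, dslope_of_ne G hzne, slope_def_field, hG0, sub_zero, sub_zero]
      apply div_ne_zero _ hzne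
      have hzabs : ‖z‖ ≤ 1 := by simpa [mem_closedBall, dist_zero_right] using hz
      rcases eq_or_lt_of_le hzabs with h | h
      · intro h0
        have := hGsph z h
        rw [h0] at this; simp at this
      · intro h0
        have hzb : z ∈ ball (0:ℂ) 1 := by simpa [mem_ball, dist_zero_right] using h
        have : z = 0 := hGinj hzb (mem_ball_self one_pos) (by rw [h0, hG0])
        exact hzne this
  -- minimum modulus principle applied to F⁻¹
  have hcl : closure (ball (0:ℂ) 1) = closedBall (0:ℂ) 1 := closure_ball (0:ℂ) one_ne_zero
  have hFcont : ContinuousOn F (closedBall (0:ℂ) 1) :=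
    (hFdiff.continuousOn).mono (closedBall_subset_ball hs1)
  have hdcc : DiffContOnCl ℂ (fun z => (F z)⁻¹) (ball (0:ℂ) 1) := by
    constructor
    · exact DifferentiableOn.inv (hFdiff.mono hball1s)
        (fun x hx => hFne x (ball_subset_closedBall hx))
    · rw [hcl]
      exact ContinuousOn.inv₀ hFcont hFne
  have hbound : ∀ z ∈ frontier (ball (0:ℂ) 1), ‖(F z)⁻¹‖ ≤ 1 := by
    intro z hz
    rw [frontier_ball (0:ℂ) one_ne_zero] at hz
    have hzabs : ‖z‖ = 1 := by simpa [mem_sphere, dist_zero_right] using hz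
    have hzne : z ≠ 0 := by intro h0; rw [h0] at hzabs; simp at hzabs
    have : F z = G z / z := by
      rw [hFdef, dslope_of_ne G hzne, slope_def_field, hG0, sub_zero, sub_zero]
    rw [this, norm_inv]
    rw [show ‖G z / z‖ = ‖G z / z‖ from rfl, norm_div, hGsph z hzabs, hzabs]
    norm_num
  have hFinv_le : ∀ z ∈ closedBall (0:ℂ) 1, ‖(F z)⁻¹‖ ≤ 1 := by
    intro z hz
    exact Complex.norm_le_of_forall_mem_frontier_norm_le isBounded_ball hdcc hbound
      (by rw [hcl]; exact hz)
  have hFhalf : ‖F (1/2 : ℂ)‖ = 1 := by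
    have h1 : (1/2 : ℂ) ∈ ball (0:ℂ) 1 := by
      simp [mem_ball, dist_zero_right]
      norm_num
    have h2 : (1/2 : ℂ) ∈ closedBall (0:ℂ) 1 := ball_subset_closedBall h1
    have hle := hFle _ h1
    have hge := hFinv_le _ h2
    rw [norm_inv] at hge
    have hFne' : F (1/2:ℂ) ≠ 0 := hFne _ h2
    have hpos : 0 < ‖F (1/2:ℂ)‖ := norm_pos_iff.mpr hFne'
    have : 1 ≤ ‖F (1/2:ℂ)‖ := by
      rw [inv_le_one_iff₀] at hge
      rcases hge with h | h
      · exfalso; linarith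
      · exact h
    linarith
  have haffine := Complex.affine_of_mapsTo_ball_of_exists_norm_dslope_eq_div hGdiff1 (hGmaps'.mono_right ball_subset_closedBall)
    (by simp [mem_ball, dist_zero_right]; norm_num : (1/2:ℂ) ∈ ball (0:ℂ) 1)
    (by rw [← hFdef]; simpa using hFhalf)
  set l : ℂ := dslope G 0 (1/2 : ℂ) with hldef
  have hlne : l ≠ 0 := by
    rw [hldef, ← hFdef]
    exact hFne _ (ball_subset_closedBall (by simp [mem_ball, dist_zero_right]; norm_num))
  refine ⟨l, z0, hz0abs, hlne, ?_⟩
  intro z hz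
  have hzabs : ‖z‖ < 1 := by simpa [mem_ball, dist_zero_right] using hz
  have hBz : B z ∈ ball (0:ℂ) 1 := hBmaps z hz
  have h1 : G (B z) = G 0 + (B z - 0) • l := haffine hBz
  rw [hG0, zero_add, sub_zero, smul_eq_mul] at h1
  have h2 : G (B z) = ψ z := by
    rw [hGdef]
    simp only
    rw [hBinvol z hzabs.le]
  rw [h2] at h1
  -- h1 : ψ z = B z * l
  have hden : 1 - c * z ≠ 0 := hBden z (lt_trans hzabs hs₀1)
  rw [h1, hBdef]
  simp only
  rw [hcdef] at hden ⊢
  rw [div_mul_eq_mul_div, div_mul_eq_mul_div, div_eq_iff hden]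
  ring


/-- A hyperbolic automorphism of the open unit disc `𝔻`, with attractive fixed
point `a` and repulsive fixed point `b` on the unit circle, and (real) derivative
values `da = ψ'(a) ∈ (0,1)`, `db = ψ'(b) ∈ (1,∞)` with `da * db = 1`. -/
structure HypAuto where
  ψ : ℂ → ℂ
  a : ℂ
  b : ℂ
  da : ℝ
  db : ℝ
  ha : ‖a‖ = 1
  hb : ‖b‖ = 1
  hab : a ≠ b
  holo : ∃ R > 1, DifferentiableOn ℂ ψ (ball (0:ℂ) R)
  bij : BijOn ψ (ball (0:ℂ) 1) (ball (0:ℂ) 1)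
  noFix : ∀ z ∈ ball (0:ℂ) 1, ψ z ≠ z
  fixa : ψ a = a
  fixb : ψ b = b
  hda : deriv ψ a = (da : ℂ)
  hdb : deriv ψ b = (db : ℂ)
  hda1 : 0 < da ∧ da < 1
  hdb1 : 1 < db
  hmulder : da * db = 1
  attract : ∀ z ∈ ball (0:ℂ) 1, Tendsto (fun n => ψ^[n] z) atTop (nhds a)

/-- For any `w ∈ ℂ`, the function `h_w(z) = ((b-z)/(a-z))^w` satisfies
`h_w(ψ z) = e^{δw} h_w(z)` on `𝔻`, where `δ = -log ψ'(a)`. -/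
theorem hw_eigenfunction_identity (h : HypAuto) (w : ℂ) :
    ∀ z ∈ ball (0:ℂ) 1,
      ((h.b - h.ψ z) / (h.a - h.ψ z)) ^ w =
        Complex.exp ((-Real.log h.da : ℂ) * w) * ((h.b - z) / (h.a - z)) ^ w := by
  classical
  obtain ⟨R, hR, hd⟩ := h.holo
  obtain ⟨l, p, hp, hl, heq⟩ := exists_blaschke_form hR hd h.bij
  set c : ℂ := (starRingEnd ℂ) p with hcdef
  -- extend the functional equation to the whole of `ball 0 R` by the identity theorem
  have hu : AnalyticOnNhd ℂ (fun z => h.ψ z * (1 - c * z)) (ball (0:ℂ) R) := by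
    apply DifferentiableOn.analyticOnNhd _ isOpen_ball
    exact hd.mul ((differentiableOn_const 1).sub
      ((differentiableOn_const c).mul (differentiable_id.differentiableOn)))
  have hv : AnalyticOnNhd ℂ (fun z => l * (p - z)) (ball (0:ℂ) R) := by
    apply DifferentiableOn.analyticOnNhd _ isOpen_ball
    exact ((differentiableOn_const p).sub differentiable_id.differentiableOn).const_mul l
  have h0R : (0:ℂ) ∈ ball (0:ℂ) R := mem_ball_self (by linarith)
  have hfreq : ∃ᶠ z in 𝓝[≠] (0:ℂ), (fun z => h.ψ z * (1 - c * z)) z = (fun z => l * (p - z)) z := by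
    apply Filter.Eventually.frequently
    apply eventually_nhdsWithin_of_eventually_nhds
    filter_upwards [isOpen_ball.mem_nhds (mem_ball_self one_pos)] with z hz
    exact heq z hz
  have hEq : Set.EqOn (fun z => h.ψ z * (1 - c * z)) (fun z => l * (p - z)) (ball (0:ℂ) R) :=
    hu.eqOn_of_preconnected_of_frequently_eq hv (convex_ball (0:ℂ) R).isPreconnected h0R hfreq
  have haR : h.a ∈ ball (0:ℂ) R := by
    simp only [mem_ball, dist_zero_right]
    rw [show ‖h.a‖ = ‖h.a‖ from rfl, h.ha]; linarith
  have hbR : h.b ∈ ball (0:ℂ) R := by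
    simp only [mem_ball, dist_zero_right]
    rw [show ‖h.b‖ = ‖h.b‖ from rfl, h.hb]; linarith
  have F2 : h.a * (1 - c * h.a) = l * (p - h.a) := by
    have := hEq haR
    simp only at this
    rwa [h.fixa] at this
  have F3 : h.b * (1 - c * h.b) = l * (p - h.b) := by
    have := hEq hbR
    simp only at this
    rwa [h.fixb] at this
  -- derivative relation at `h.a`
  have hψa : DifferentiableAt ℂ h.ψ h.a := hd.differentiableAt (isOpen_ball.mem_nhds haR)
  have hder_u : HasDerivAt (fun z => h.ψ z * (1 - c * z)) ((h.da : ℂ) * (1 - c * h.a) - c * h.a) h.a := by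
    have h1 : HasDerivAt h.ψ ((h.da : ℂ)) h.a := by
      have := hψa.hasDerivAt
      rwa [h.hda] at this
    have h2 : HasDerivAt (fun z : ℂ => 1 - c * z) (-c) h.a := by
      have := ((hasDerivAt_id h.a).const_mul c).const_sub 1
      simpa using this
    have := h1.mul h2
    have h3 : (h.da : ℂ) * (1 - c * h.a) + h.ψ h.a * -c = (h.da : ℂ) * (1 - c * h.a) - c * h.a := by
      rw [h.fixa]; ring
    rwa [h3] at this
  have hder_v : HasDerivAt (fun z : ℂ => l * (p - z)) (-l) h.a := by
    have := ((hasDerivAt_id h.a).const_sub p).const_mul l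
    simpa using this
  have hev : (fun z => h.ψ z * (1 - c * z)) =ᶠ[𝓝 h.a] (fun z => l * (p - z)) := by
    filter_upwards [isOpen_ball.mem_nhds haR] with z hz
    exact hEq hz
  have F4 : (h.da : ℂ) * (1 - c * h.a) - c * h.a = -l := by
    have e1 : deriv (fun z => h.ψ z * (1 - c * z)) h.a = deriv (fun z : ℂ => l * (p - z)) h.a :=
      hev.deriv_eq
    rw [hder_u.deriv, hder_v.deriv] at e1
    exact e1
  have hab : h.a ≠ h.b := h.hab
  have S1 : l = c * (h.a + h.b) - 1 := by
    have hfac : (h.a - h.b) * (l - (c * (h.a + h.b) - 1)) = 0 := by linear_combination F2 - F3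
    rcases mul_eq_zero.mp hfac with h1 | h1
    · exact absurd (by linear_combination h1) hab
    · linear_combination h1
  have S2 : (h.da : ℂ) * (1 - c * h.a) = 1 - c * h.b := by linear_combination F4 - S1
  -- now the pointwise identity on the unit ball
  intro z hz
  have hzabs : ‖z‖ < 1 := by simpa [mem_ball, dist_zero_right] using hz
  have F1 : h.ψ z * (1 - c * z) = l * (p - z) := heq z hz
  have Hb : h.b * (1 - c * z) - l * (p - z) = (1 - c * h.a) * (h.b - z) := by
    linear_combination F3 + (z - h.b) * S1
  have Ha : h.a * (1 - c * z) - l * (p - z) = (1 - c * h.b) * (h.a - z) := by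
    linear_combination F2 + (z - h.a) * S1
  have e1 : (h.b - h.ψ z) * (1 - c * z) = (1 - c * h.a) * (h.b - z) := by
    linear_combination Hb - F1
  have e2 : (h.a - h.ψ z) * (1 - c * z) = (1 - c * h.b) * (h.a - z) := by
    linear_combination Ha - F1
  have hcz : 1 - c * z ≠ 0 := by
    apply one_sub_ne_zero_of_abs_lt
    rw [norm_mul, hcdef, Complex.norm_conj]
    calc ‖p‖ * ‖z‖ ≤ 1 * ‖z‖ :=
          mul_le_mul_of_nonneg_right hp.le (norm_nonneg z)
      _ < 1 := by simpa using hzabs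
  have key : ((h.da : ℂ) * ((h.b - h.ψ z) * (h.a - z))) * (1 - c * z)
      = ((h.a - h.ψ z) * (h.b - z)) * (1 - c * z) := by
    linear_combination ((h.da : ℂ) * (h.a - z)) * e1 - (h.b - z) * e2 + ((h.a - z) * (h.b - z)) * S2
  have E : (h.da : ℂ) * ((h.b - h.ψ z) * (h.a - z)) = (h.a - h.ψ z) * (h.b - z) :=
    mul_right_cancel₀ hcz key
  -- nonvanishing
  have haz : h.a - z ≠ 0 := by
    intro h0
    have : h.a = z := by linear_combination h0
    rw [← this] at hzabs
    rw [h.ha] at hzabs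
    linarith
  have hbz : h.b - z ≠ 0 := by
    intro h0
    have : h.b = z := by linear_combination h0
    rw [← this] at hzabs
    rw [h.hb] at hzabs
    linarith
  have hψz : h.ψ z ∈ ball (0:ℂ) 1 := h.bij.mapsTo hz
  have hψzabs : ‖h.ψ z‖ < 1 := by simpa [mem_ball, dist_zero_right] using hψz
  have haψ : h.a - h.ψ z ≠ 0 := by
    intro h0
    have : h.a = h.ψ z := by linear_combination h0
    rw [← this] at hψzabs
    rw [h.ha] at hψzabs
    linarith
  have hbψ : h.b - h.ψ z ≠ 0 := by
    intro h0
    have : h.b = h.ψ z := by linear_combination h0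
    rw [← this] at hψzabs
    rw [h.hb] at hψzabs
    linarith
  have hda0 : h.da ≠ 0 := ne_of_gt h.hda1.1
  have hdb0 : h.db ≠ 0 := by linarith [h.hdb1]
  have hdaC : (h.da : ℂ) ≠ 0 := Complex.ofReal_ne_zero.mpr hda0
  have hdbC : (h.db : ℂ) ≠ 0 := Complex.ofReal_ne_zero.mpr hdb0
  have hmulC : (h.da : ℂ) * (h.db : ℂ) = 1 := by
    rw [← Complex.ofReal_mul, h.hmulder, Complex.ofReal_one]
  have hratio : (h.b - h.ψ z) / (h.a - h.ψ z) = (h.db : ℂ) * ((h.b - z) / (h.a - z)) := by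
    rw [show (h.db : ℂ) * ((h.b - z) / (h.a - z)) = ((h.db : ℂ) * (h.b - z)) / (h.a - z) from
        (mul_div_assoc _ _ _).symm,
      div_eq_div_iff haψ haz]
    linear_combination (h.db : ℂ) * E - ((h.b - h.ψ z) * (h.a - z)) * hmulC
  -- the `cpow` computation
  set q : ℂ := (h.b - z) / (h.a - z) with hqdef
  have hq0 : q ≠ 0 := div_ne_zero hbz haz
  have hdbpos : (0:ℝ) < h.db := by linarith [h.hdb1]
  rw [hratio]
  rw [Complex.cpow_def_of_ne_zero (mul_ne_zero hdbC hq0),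
    Complex.log_ofReal_mul hdbpos hq0, Complex.cpow_def_of_ne_zero hq0]
  rw [add_mul, Complex.exp_add]
  congr 2
  have hlog : Real.log h.da + Real.log h.db = 0 := by
    rw [← Real.log_mul hda0 hdb0, h.hmulder, Real.log_one]
  push_cast
  have : (Real.log h.db : ℂ) = -(Real.log h.da : ℂ) := by
    have : (Real.log h.da : ℂ) + (Real.log h.db : ℂ) = 0 := by
      rw [← Complex.ofReal_add, hlog, Complex.ofReal_zero]
    linear_combination this
  rw [this]
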